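/- Let G = 𝔅₄ = ⟨σ₁, σ₂, σ₃ | σ₁σ₃ = σ₃σ₁, σ₁σ₂σ₁ = σ₂σ₁σ₂, σ₂σ₃σ₂ = σ₃σ₂σ₃⟩ be the braid group on four strands. Its abelianization is infinite cyclic, with each σᵢ mapping to the same generator. Regard the rationalized Alexander module G'/G'' ⊗_ℤ ℚ as a module over ℚ[t, t⁻¹], where t acts via conjugation by σ₁. Then G'/G'' ⊗_ℤ ℚ ≅ ℚ[t,t⁻¹]/(t² − t + 1) as ℚ[t,t⁻¹]-modules; in particular the zeroth-order degree of 𝔅₄ is δ₀ = dim_ℚ( G'/G'' ⊗ ℚ ) = 2. -/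

import Mathlib

/-!
STATEMENT 15: For the braid group `𝔅₄` on four strands (with its standard Artin
presentation), the abelianization is infinite cyclic with each `σᵢ` mapping to the same
generator, and the rationalized Alexander module `G'/G'' ⊗_ℤ ℚ`, with `t` acting by
conjugation by `σ₁`, is isomorphic to `ℚ[t,t⁻¹]/(t² - t + 1)`; in particular
`δ₀(𝔅₄) = dim_ℚ(G'/G'' ⊗ ℚ) = 2`.
-/

open scoped TensorProduct
open FreeGroup

/-- The standard Artin relators of the braid group `𝔅₄`, with `σᵢ = of (i-1)`. -/
def braidRels : Set (FreeGroup (Fin 3)) :=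
  {of 0 * of 2 * (of 2 * of 0)⁻¹,
    of 0 * of 1 * of 0 * (of 1 * of 0 * of 1)⁻¹,
    of 1 * of 2 * of 1 * (of 2 * of 1 * of 2)⁻¹}

/-- The braid group on four strands. -/
def BraidFour : Type := PresentedGroup braidRels

instance : Group BraidFour := by unfold BraidFour; infer_instance

variable {G : Type*} [Group G]

/-- Conjugation by `g` on the abelianization of a normal subgroup. -/
def conjAb (N : Subgroup G) [N.Normal] (g : G) :
    Abelianization ↥N →* Abelianization ↥N :=
  Abelianization.map (MulAut.conjNormal g).toMonoidHom

theorem conjAb_one (N : Subgroup G) [N.Normal] : conjAb N 1 = MonoidHom.id _ := by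
  apply Abelianization.hom_ext
  ext x
  simp [conjAb]

theorem conjAb_mul (N : Subgroup G) [N.Normal] (g h : G) :
    conjAb N (g * h) = (conjAb N g).comp (conjAb N h) := by
  apply Abelianization.hom_ext
  ext x
  simp [conjAb, map_mul]

/-- The conjugation action of `G` on the abelianization of a normal subgroup, as a
monoid homomorphism into the `ℤ`-linear endomorphisms. -/
def conjAct (N : Subgroup G) [N.Normal] :
    G →* Module.End ℤ (Additive (Abelianization ↥N)) where
  toFun g := (MonoidHom.toAdditive (conjAb N g)).toIntLinearMap
  map_one' := by rw [conjAb_one]; rfl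
  map_mul' g h := by rw [conjAb_mul]; rfl

noncomputable section

/-- The rationalized Alexander module `G'/G'' ⊗_ℤ ℚ` of the braid group `𝔅₄`. -/
def AlexQ : Type :=
  ℚ ⊗[ℤ] Additive (Abelianization ↥(commutator BraidFour))

instance : AddCommGroup AlexQ := by unfold AlexQ; infer_instance
instance : Module ℚ AlexQ := by unfold AlexQ; infer_instance

/-- The action of `t` on `G'/G'' ⊗_ℤ ℚ`, namely conjugation by `σ₁`. -/
def tAction : Module.End ℚ AlexQ :=
  Module.End.baseChangeHom ℤ ℚ (Additive (Abelianization ↥(commutator BraidFour)))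
    (conjAct (commutator BraidFour) (PresentedGroup.of (rels := braidRels) 0))

namespace BraidAux

def sg (i : Fin 3) : BraidFour := PresentedGroup.of (rels := braidRels) i

lemma mk_rel {r : FreeGroup (Fin 3)} (h : r ∈ braidRels) :
    PresentedGroup.mk braidRels r = 1 :=
  (QuotientGroup.eq_one_iff _).mpr (Subgroup.subset_normalClosure h)

lemma rel1 : sg 0 * sg 2 = sg 2 * sg 0 := by
  have h := mk_rel (show of 0 * of 2 * (of 2 * of 0)⁻¹ ∈ braidRels by left; rfl)
  simp only [_root_.map_mul, _root_.map_inv] at h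
  exact mul_inv_eq_one.mp h

lemma rel2 : sg 0 * sg 1 * sg 0 = sg 1 * sg 0 * sg 1 := by
  have h := mk_rel (show of 0 * of 1 * of 0 * (of 1 * of 0 * of 1)⁻¹ ∈ braidRels by
    right; left; rfl)
  simp only [_root_.map_mul, _root_.map_inv] at h
  exact mul_inv_eq_one.mp h

lemma rel3 : sg 1 * sg 2 * sg 1 = sg 2 * sg 1 * sg 2 := by
  have h := mk_rel (show of 1 * of 2 * of 1 * (of 2 * of 1 * of 2)⁻¹ ∈ braidRels by
    right; right; rfl)
  simp only [_root_.map_mul, _root_.map_inv] at h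
  exact mul_inv_eq_one.mp h

def deg : BraidFour →* Multiplicative ℤ :=
  PresentedGroup.toGroup (f := fun _ => Multiplicative.ofAdd (1 : ℤ)) (by
    intro r hr
    rcases hr with h | h | h <;> subst h <;>
      simp only [_root_.map_mul, _root_.map_inv, FreeGroup.lift_apply_of] <;> group)

@[simp] lemma deg_sg (i : Fin 3) : deg (sg i) = Multiplicative.ofAdd 1 :=
  PresentedGroup.toGroup.of _

lemma braid_cancel {A : Type*} [CommGroup A] {a b : A} (h : a * b * a = b * a * b) :
    a = b := by
  have h2 := congrArg (fun x => a⁻¹ * x * b⁻¹) h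
  simpa [mul_assoc, mul_comm, mul_left_comm] using h2

lemma ab_sg_eq (i : Fin 3) :
    Abelianization.of (sg i) = Abelianization.of (sg 0) := by
  have h2 := congrArg Abelianization.of rel2
  have h3 := congrArg Abelianization.of rel3
  simp only [_root_.map_mul] at h2 h3
  have e01 := braid_cancel h2
  have e12 := braid_cancel h3
  fin_cases i
  · rfl
  · exact e01.symm
  · exact e12.symm.trans e01.symm

end BraidAux
namespace BraidAux

def degAb : Abelianization BraidFour →* Multiplicative ℤ := Abelianization.lift deg

noncomputable def abIso : Abelianization BraidFour ≃* Multiplicative ℤ := by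
  refine MonoidHom.toMulEquiv degAb (zpowersHom _ (Abelianization.of (sg 0))) ?_ ?_
  · apply Abelianization.hom_ext
    apply PresentedGroup.ext
    intro x
    show zpowersHom _ (Abelianization.of (sg 0)) (degAb (Abelianization.of (sg x))) = Abelianization.of (sg x)
    rw [ab_sg_eq x]
    simp [degAb, zpowersHom_apply]
  · apply MonoidHom.ext_mint
    simp [degAb, zpowersHom_apply]

lemma abIso_of (i : Fin 3) :
    abIso (Abelianization.of (sg i)) = Multiplicative.ofAdd 1 := by
  show degAb (Abelianization.of (sg i)) = _
  simp [degAb]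

end BraidAux
namespace BraidAux

abbrev NN : Subgroup BraidFour := commutator BraidFour

def u : BraidFour := sg 1 * (sg 0)⁻¹
def v : BraidFour := sg 2 * (sg 0)⁻¹

/-- conjugate by `sg 0 ^ k` -/
def w (k : ℤ) (x : BraidFour) : BraidFour := sg 0 ^ k * x * sg 0 ^ (-k)

lemma mem_NN_iff {x : BraidFour} : x ∈ NN ↔ Abelianization.of x = 1 :=
  (QuotientGroup.eq_one_iff x).symm

lemma hu : u ∈ NN := by
  rw [mem_NN_iff]
  show Abelianization.of (sg 1 * (sg 0)⁻¹) = 1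
  rw [_root_.map_mul, _root_.map_inv, ab_sg_eq 1, mul_inv_cancel]

lemma hv : v ∈ NN := by
  rw [mem_NN_iff]
  show Abelianization.of (sg 2 * (sg 0)⁻¹) = 1
  rw [_root_.map_mul, _root_.map_inv, ab_sg_eq 2, mul_inv_cancel]

lemma hw {x : BraidFour} (hx : x ∈ NN) (k : ℤ) : w k x ∈ NN := by
  have := (NN.normal_of_characteristic).conj_mem x hx (sg 0 ^ k)
  simpa [w, ← zpow_neg] using this

lemma E1 : w 1 v = v := by
  show sg 0 ^ (1:ℤ) * (sg 2 * (sg 0)⁻¹) * sg 0 ^ (-1:ℤ) = sg 2 * (sg 0)⁻¹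
  rw [show sg 0 ^ (1:ℤ) * (sg 2 * (sg 0)⁻¹) * sg 0 ^ (-1:ℤ)
      = (sg 0 * sg 2) * ((sg 0)⁻¹ * (sg 0)⁻¹) from by group, rel1]
  group

lemma E2 : w 1 u = u * w 2 u := by
  show sg 0 ^ (1:ℤ) * (sg 1 * (sg 0)⁻¹) * sg 0 ^ (-1:ℤ)
      = (sg 1 * (sg 0)⁻¹) * (sg 0 ^ (2:ℤ) * (sg 1 * (sg 0)⁻¹) * sg 0 ^ (-2:ℤ))
  rw [show sg 0 ^ (1:ℤ) * (sg 1 * (sg 0)⁻¹) * sg 0 ^ (-1:ℤ)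
      = (sg 0 * sg 1 * sg 0) * ((sg 0)⁻¹ * (sg 0)⁻¹ * (sg 0)⁻¹) from by group, rel2]
  group

lemma E3 : u * w 1 v * w 2 u = v * w 1 u * w 2 v := by
  show (sg 1 * (sg 0)⁻¹) * (sg 0 ^ (1:ℤ) * (sg 2 * (sg 0)⁻¹) * sg 0 ^ (-1:ℤ))
        * (sg 0 ^ (2:ℤ) * (sg 1 * (sg 0)⁻¹) * sg 0 ^ (-2:ℤ))
      = (sg 2 * (sg 0)⁻¹) * (sg 0 ^ (1:ℤ) * (sg 1 * (sg 0)⁻¹) * sg 0 ^ (-1:ℤ))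
        * (sg 0 ^ (2:ℤ) * (sg 2 * (sg 0)⁻¹) * sg 0 ^ (-2:ℤ))
  rw [show (sg 1 * (sg 0)⁻¹) * (sg 0 ^ (1:ℤ) * (sg 2 * (sg 0)⁻¹) * sg 0 ^ (-1:ℤ))
        * (sg 0 ^ (2:ℤ) * (sg 1 * (sg 0)⁻¹) * sg 0 ^ (-2:ℤ))
      = (sg 1 * sg 2 * sg 1) * ((sg 0)⁻¹ * (sg 0)⁻¹ * (sg 0)⁻¹) from by group, rel3]
  group

end BraidAux
namespace BraidAux

def S : Set BraidFour := {x | ∃ k : ℤ, x = w k u ∨ x = w k v}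

def H : Subgroup BraidFour := Subgroup.closure S

lemma S_subset_NN : S ⊆ NN := by
  rintro x ⟨k, h | h⟩ <;> subst h
  · exact hw hu k
  · exact hw hv k

lemma H_le_NN : H ≤ NN := (Subgroup.closure_le _).mpr S_subset_NN

lemma conj_H {h : BraidFour} (hh : h ∈ H) (k : ℤ) : sg 0 ^ k * h * sg 0 ^ (-k) ∈ H := by
  have himg : ((MulAut.conj (sg 0 ^ k)).toMonoidHom) '' S ⊆ S := by
    rintro x ⟨y, ⟨m, hy | hy⟩, rfl⟩ <;> subst hy
    · exact ⟨k + m, Or.inl (by simp only [MulEquiv.coe_toMonoidHom, MulAut.conj_apply, w]; group)⟩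
    · exact ⟨k + m, Or.inr (by simp only [MulEquiv.coe_toMonoidHom, MulAut.conj_apply, w]; group)⟩
  have : H.map (MulAut.conj (sg 0 ^ k)).toMonoidHom ≤ H := by
    rw [H, MonoidHom.map_closure]
    exact Subgroup.closure_le _ |>.mpr (himg.trans Subgroup.subset_closure)
  have hx : sg 0 ^ k * h * (sg 0 ^ k)⁻¹ ∈ H :=
    this ⟨h, hh, rfl⟩
  rwa [← zpow_neg] at hx

def T : Subgroup BraidFour where
  carrier := {g | g * sg 0 ^ (-(deg g).toAdd) ∈ H}
  one_mem' := by simpa using one_mem H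
  mul_mem' := by
    intro a b ha hb
    simp only [Set.mem_setOf_eq, _root_.map_mul, toAdd_mul] at ha hb ⊢
    rw [show a * b * sg 0 ^ (-((deg a).toAdd + (deg b).toAdd))
        = (a * sg 0 ^ (-(deg a).toAdd)) *
          (sg 0 ^ ((deg a).toAdd) * (b * sg 0 ^ (-(deg b).toAdd)) * sg 0 ^ (-(deg a).toAdd))
        from by group]
    exact mul_mem ha (conj_H hb _)
  inv_mem' := by
    intro a ha
    simp only [Set.mem_setOf_eq, _root_.map_inv, toAdd_inv, neg_neg] at ha ⊢
    rw [show a⁻¹ * sg 0 ^ ((deg a).toAdd)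
        = sg 0 ^ (-(deg a).toAdd) * (a * sg 0 ^ (-(deg a).toAdd))⁻¹ * sg 0 ^ (-(-(deg a).toAdd))
        from by group]
    exact conj_H (inv_mem ha) _

lemma T_eq_top : ∀ g : BraidFour, g ∈ T := by
  intro g
  refine PresentedGroup.generated_by braidRels T ?_ g
  intro j
  show sg j * sg 0 ^ (-(deg (sg j)).toAdd) ∈ H
  rw [deg_sg]
  have h1 : (Multiplicative.ofAdd (1:ℤ)).toAdd = 1 := rfl
  rw [h1]
  fin_cases j
  · show sg 0 * sg 0 ^ (-1:ℤ) ∈ H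
    rw [show sg 0 * sg 0 ^ (-1 : ℤ) = 1 from by group]
    exact one_mem H
  · show sg 1 * sg 0 ^ (-1:ℤ) ∈ H
    refine Subgroup.subset_closure ⟨0, Or.inl ?_⟩
    show sg 1 * sg 0 ^ (-1:ℤ) = w 0 (sg 1 * (sg 0)⁻¹)
    simp only [w]; group
  · show sg 2 * sg 0 ^ (-1:ℤ) ∈ H
    refine Subgroup.subset_closure ⟨0, Or.inr ?_⟩
    show sg 2 * sg 0 ^ (-1:ℤ) = w 0 (sg 2 * (sg 0)⁻¹)
    simp only [w]; group

lemma NN_le_H : NN ≤ H := by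
  intro n hn
  have hdeg : deg n = 1 := Abelianization.commutator_subset_ker deg hn
  have := T_eq_top n
  rw [show (n ∈ T) = (n * sg 0 ^ (-(deg n).toAdd) ∈ H) from rfl, hdeg] at this
  simpa using this

def SN : Set ↥NN := {x | ∃ k : ℤ, (x : BraidFour) = w k u ∨ (x : BraidFour) = w k v}

lemma mem_closure_SN (n : ↥NN) : n ∈ Subgroup.closure SN := by
  have hn : (n : BraidFour) ∈ H := NN_le_H n.2
  have key : ∀ x (hx : x ∈ H), ∀ hxN : x ∈ NN, (⟨x, hxN⟩ : ↥NN) ∈ Subgroup.closure SN := by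
    intro x hx
    induction hx using Subgroup.closure_induction with
    | mem y hy =>
        intro hyN
        exact Subgroup.subset_closure (by obtain ⟨k, h | h⟩ := hy
                                          exacts [⟨k, Or.inl h⟩, ⟨k, Or.inr h⟩])
    | one => intro h1; exact one_mem (Subgroup.closure SN)
    | mul y z hy hz ihy ihz =>
        intro hyz
        have hyN : y ∈ NN := H_le_NN hy
        have hzN : z ∈ NN := H_le_NN hz
        have : (⟨y * z, hyz⟩ : ↥NN) = ⟨y, hyN⟩ * ⟨z, hzN⟩ := rfl
        rw [this]
        exact mul_mem (ihy hyN) (ihz hzN)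
    | inv y hy ihy =>
        intro hyi
        have hyN : y ∈ NN := H_le_NN hy
        have : (⟨y⁻¹, hyi⟩ : ↥NN) = (⟨y, hyN⟩)⁻¹ := rfl
        rw [this]
        exact inv_mem (ihy hyN)
  simpa using key n hn n.2

end BraidAux
namespace BraidAux

def uN : ↥NN := ⟨u, hu⟩
def vN : ↥NN := ⟨v, hv⟩
def wuN (k : ℤ) : ↥NN := ⟨w k u, hw hu k⟩
def wvN (k : ℤ) : ↥NN := ⟨w k v, hw hv k⟩

def cls (x : ↥NN) : Additive (Abelianization ↥NN) := Additive.ofMul (Abelianization.of x)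

lemma cls_mul (x y : ↥NN) : cls (x * y) = cls x + cls y := by
  simp only [cls, _root_.map_mul]; rfl

lemma cls_one : cls 1 = 0 := by simp only [cls, _root_.map_one]; rfl

lemma cls_inv (x : ↥NN) : cls x⁻¹ = - cls x := by
  simp only [cls, _root_.map_inv]; rfl

lemma comm_v : sg 0 * v = v * sg 0 := by
  show sg 0 * (sg 2 * (sg 0)⁻¹) = (sg 2 * (sg 0)⁻¹) * sg 0
  rw [show sg 0 * (sg 2 * (sg 0)⁻¹) = (sg 0 * sg 2) * ((sg 0)⁻¹) from by group, rel1]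
  group

lemma w_v (k : ℤ) : w k v = v := by
  have hc : Commute (sg 0) v := comm_v
  have := (hc.zpow_left k).eq
  simp only [w]
  rw [this]
  group

lemma wvN_eq (k : ℤ) : wvN k = vN := Subtype.ext (w_v k)

lemma conjNormal_pow (k : ℤ) (x : ↥NN) (hx : _) :
    MulAut.conjNormal (sg 0 ^ k) x = ⟨w k (x : BraidFour), hx⟩ := by
  apply Subtype.ext
  simp only [MulAut.conjNormal_apply, w, zpow_neg]

lemma conjAct_cls (g : BraidFour) (x : ↥NN) :
    conjAct NN g (cls x) = cls (MulAut.conjNormal g x) := by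
  simp only [conjAct, conjAb, cls]
  rfl

-- relation E2 at the level of the abelianization
lemma R2 : cls (wuN 1) = cls uN + cls (wuN 2) := by
  have h : wuN 1 = uN * wuN 2 := Subtype.ext E2
  rw [h, cls_mul]

lemma clsv_eq_zero : cls vN = 0 := by
  have h3 : cls uN + cls vN + cls (wuN 2) = cls vN + cls (wuN 1) + cls vN := by
    have h : (uN * wvN 1 * wuN 2 : ↥NN) = vN * wuN 1 * wvN 2 := Subtype.ext E3
    have h' := congrArg cls h
    rw [cls_mul, cls_mul, cls_mul, cls_mul, wvN_eq, wvN_eq] at h'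
    exact h'
  rw [R2] at h3
  have h2 : cls uN + cls (wuN 2) + cls vN
      = cls uN + cls (wuN 2) + (cls vN + cls vN) := by
    calc cls uN + cls (wuN 2) + cls vN = cls uN + cls vN + cls (wuN 2) := by abel
    _ = cls vN + (cls uN + cls (wuN 2)) + cls vN := h3
    _ = cls uN + cls (wuN 2) + (cls vN + cls vN) := by abel
  have h1 := add_left_cancel h2
  have h0 : cls vN + 0 = cls vN + cls vN := by simpa using h1
  exact (add_left_cancel h0).symm

end BraidAux
namespace BraidAux

def conjEnd (g : BraidFour) : Module.End ℚ AlexQ :=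
  Module.End.baseChangeHom ℤ ℚ (Additive (Abelianization ↥(commutator BraidFour)))
    (conjAct (commutator BraidFour) g)

lemma tAction_eq : tAction = conjEnd (sg 0) := rfl

lemma conjEnd_mul (g h : BraidFour) (x : AlexQ) :
    conjEnd (g * h) x = conjEnd g (conjEnd h x) := by
  have : conjEnd (g * h) = conjEnd g * conjEnd h := by
    unfold conjEnd
    rw [_root_.map_mul, _root_.map_mul]
    rfl
  rw [this]; rfl

def tm (r : ℚ) (m : Additive (Abelianization ↥NN)) : AlexQ := r ⊗ₜ[ℤ] m

lemma tm_add (r : ℚ) (m m' : Additive (Abelianization ↥NN)) :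
    tm r (m + m') = tm r m + tm r m' := TensorProduct.tmul_add r m m'

lemma conjEnd_tm (g : BraidFour) (r : ℚ) (m : Additive (Abelianization ↥NN)) :
    conjEnd g (tm r m) = tm r (conjAct NN g m) := by
  show (Module.End.baseChangeHom ℤ ℚ _ (conjAct NN g)) (r ⊗ₜ[ℤ] m) = r ⊗ₜ[ℤ] _
  exact LinearMap.baseChange_tmul _ _ _

def al : AlexQ := tm 1 (cls uN)
def bet : AlexQ := tm 1 (cls vN)

lemma bet_eq_zero : bet = 0 := by
  rw [bet, clsv_eq_zero]
  exact TensorProduct.tmul_zero _ _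

lemma conjEnd_al (k : ℤ) : conjEnd (sg 0 ^ k) al = tm 1 (cls (wuN k)) := by
  rw [al, conjEnd_tm, conjAct_cls, conjNormal_pow k uN (hw hu k)]
  rfl

lemma conjEnd_bet (k : ℤ) : conjEnd (sg 0 ^ k) bet = 0 := by
  rw [bet_eq_zero]
  exact map_zero _

-- main relation: t•α = α + t²•α
lemma rel_al : conjEnd (sg 0 ^ (1:ℤ)) al = al + conjEnd (sg 0 ^ (2:ℤ)) al := by
  rw [conjEnd_al, conjEnd_al, R2, tm_add]
  rfl

def gens : Set AlexQ := Set.range (fun k : ℤ => conjEnd (sg 0 ^ k) al)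

lemma tm_cls_mem (n : ↥NN) : tm 1 (cls n) ∈ Submodule.span ℚ gens := by
  have hn := mem_closure_SN n
  induction hn using Subgroup.closure_induction with
  | mem y hy =>
      obtain ⟨k, h | h⟩ := hy
      · have : y = wuN k := Subtype.ext h
        rw [this, ← conjEnd_al]
        exact Submodule.subset_span ⟨k, rfl⟩
      · have : y = wvN k := Subtype.ext h
        rw [this, wvN_eq]
        have : tm 1 (cls vN) = 0 := bet_eq_zero
        rw [this]
        exact zero_mem _
  | one =>
      rw [cls_one]
      have : tm 1 (0 : Additive (Abelianization ↥NN)) = 0 := TensorProduct.tmul_zero _ _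
      rw [this]; exact zero_mem _
  | mul x y _ _ ihx ihy =>
      rw [cls_mul, tm_add]
      exact add_mem ihx ihy
  | inv x _ ihx =>
      rw [cls_inv]
      have : tm 1 (-cls x) = - tm 1 (cls x) := by
        show (1:ℚ) ⊗ₜ[ℤ] (-cls x) = -((1:ℚ) ⊗ₜ[ℤ] cls x)
        rw [TensorProduct.tmul_neg]
      rw [this]
      exact neg_mem ihx

lemma span_gens : Submodule.span ℚ gens = ⊤ := by
  rw [eq_top_iff]
  rintro x -
  show x ∈ Submodule.span ℚ gens
  have : ∀ y : ℚ ⊗[ℤ] Additive (Abelianization ↥NN),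
      (y : AlexQ) ∈ Submodule.span ℚ gens := by
    intro y
    induction y using TensorProduct.induction_on with
    | zero => exact zero_mem _
    | tmul r m =>
        have hm : (r ⊗ₜ[ℤ] m : AlexQ) = r • tm 1 m := by
          show r ⊗ₜ[ℤ] m = r • ((1:ℚ) ⊗ₜ[ℤ] m)
          rw [TensorProduct.smul_tmul', smul_eq_mul, mul_one]
        obtain ⟨n, hn⟩ : ∃ n : ↥NN, Abelianization.of n = Additive.toMul m :=
          QuotientGroup.mk_surjective (Additive.toMul m)
        have hmn : m = cls n := by
          rw [cls, hn]; rfl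
        rw [hm, hmn]
        exact Submodule.smul_mem _ r (tm_cls_mem n)
    | add a b iha ihb => exact add_mem iha ihb
  exact this x

end BraidAux
namespace BraidAux

open LaurentPolynomial SemidirectProduct

abbrev LP := LaurentPolynomial ℚ

def pol : LP := LaurentPolynomial.T 2 - LaurentPolynomial.T 1 + 1

def Iq : Ideal LP := Ideal.span {pol}

abbrev Qr := LP ⧸ Iq

def mkQ : LP →ₐ[ℚ] Qr := Ideal.Quotient.mkₐ ℚ Iq

lemma mkQ_eq (f : LP) : mkQ f = Ideal.Quotient.mk Iq f := rfl

def tq (n : ℤ) : Qr := mkQ (LaurentPolynomial.T n)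

lemma tq_mul (n m : ℤ) : tq n * tq m = tq (n + m) := by
  rw [tq, tq, tq, ← _root_.map_mul, ← LaurentPolynomial.T_add]

lemma tq_zero : tq 0 = 1 := by
  rw [tq, LaurentPolynomial.T_zero, _root_.map_one]

lemma pol_rel : tq 2 - tq 1 + 1 = 0 := by
  have : mkQ pol = 0 := by
    rw [mkQ_eq, Ideal.Quotient.eq_zero_iff_mem]
    exact Ideal.subset_span rfl
  rw [pol] at this
  rw [← this, tq, tq]
  simp [map_sub, map_add]

lemma tq_one_rel : tq 1 = 1 + tq 2 := by
  have := pol_rel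
  have h : tq 1 = tq 2 - tq 1 + 1 + tq 1 - tq 2 + tq 2 := by rw [this]; ring
  rw [h]; ring

def uq : Qrˣ where
  val := tq 1
  inv := tq (-1)
  val_inv := by rw [tq_mul]; norm_num [tq_zero]
  inv_val := by rw [tq_mul]; norm_num [tq_zero]

lemma uq_zpow (k : ℤ) : ((uq ^ k : Qrˣ) : Qr) = tq k := by
  induction k using Int.induction_on with
  | zero => simpa using tq_zero.symm
  | succ n ih =>
      rw [zpow_add_one, Units.val_mul, ih]
      show tq n * tq 1 = tq (n + 1)
      rw [tq_mul]
  | pred n ih =>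
      rw [zpow_sub_one, Units.val_mul, ih]
      show tq (-n) * tq (-1) = tq (-n - 1)
      rw [tq_mul, show -(n:ℤ) + -1 = -(n:ℤ) - 1 by ring]

/-- action of `ℤ` on `Qr` by multiplication by powers of `t` -/
def addAutT : Multiplicative ℤ →* Multiplicative (AddAut Qr) :=
  (DistribMulAction.toAddAut Qrˣ Qr).comp (zpowersHom Qrˣ uq)

def rho : Multiplicative ℤ →* MulAut (Multiplicative Qr) where
  toFun n := AddEquiv.toMultiplicative (addAutT n).toAdd
  map_one' := by ext x; show Multiplicative.ofAdd ((addAutT 1).toAdd x.toAdd) = x; simp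
  map_mul' a b := by
    ext x
    show Multiplicative.ofAdd ((addAutT (a * b)).toAdd x.toAdd) = _
    rw [_root_.map_mul]
    rfl

lemma rho_apply (k : ℤ) (q : Qr) :
    rho (Multiplicative.ofAdd k) (Multiplicative.ofAdd q) = Multiplicative.ofAdd (tq k * q) := by
  show Multiplicative.ofAdd ((addAutT (Multiplicative.ofAdd k)).toAdd q) = _
  have : (addAutT (Multiplicative.ofAdd k)).toAdd q = (uq ^ k : Qrˣ) • q := rfl
  rw [this, Units.smul_def, smul_eq_mul, uq_zpow]

/-- the metabelian target group -/
abbrev W := Multiplicative Qr ⋊[rho] Multiplicative ℤ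

def x₁ : W := inr (Multiplicative.ofAdd 1)
def x₂ : W := inl (Multiplicative.ofAdd (1 : Qr)) * inr (Multiplicative.ofAdd 1)

lemma braidW : x₁ * x₂ * x₁ = x₂ * x₁ * x₂ := by
  ext
  · show (x₁ * x₂ * x₁).left = (x₂ * x₁ * x₂).left
    simp only [x₁, x₂, mul_left, left_inl, right_inl, left_inr, right_inr, mul_right,
      _root_.map_one, one_mul, mul_one]
    rw [show (Multiplicative.ofAdd (1:ℤ) * Multiplicative.ofAdd (1:ℤ))
        = Multiplicative.ofAdd (2:ℤ) from rfl, rho_apply, rho_apply, ← ofAdd_add]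
    rw [mul_one, mul_one]
    rw [tq_one_rel]
  · show (x₁ * x₂ * x₁).right = (x₂ * x₁ * x₂).right
    simp only [x₁, x₂, mul_right, right_inl, right_inr, one_mul, mul_one]

def fgen : Fin 3 → W
  | 0 => x₁
  | 1 => x₂
  | 2 => x₁

lemma fgen0 : fgen 0 = x₁ := rfl
lemma fgen1 : fgen 1 = x₂ := rfl
lemma fgen2 : fgen 2 = x₁ := rfl

def phi : BraidFour →* W :=
  PresentedGroup.toGroup (f := fgen) (by
    intro r hr
    rcases hr with h | h | h <;> subst h <;>
      simp only [_root_.map_mul, _root_.map_inv, FreeGroup.lift_apply_of, fgen0, fgen1, fgen2]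
    · group
    · exact mul_inv_eq_one.mpr braidW
    · exact mul_inv_eq_one.mpr braidW.symm)

lemma phi_sg (i : Fin 3) : phi (sg i) = fgen i := PresentedGroup.toGroup.of _

end BraidAux
namespace BraidAux

open SemidirectProduct

lemma phi_right_one {n : BraidFour} (hn : n ∈ NN) : (phi n).right = 1 := by
  have : n ∈ (rightHom.comp phi).ker := Abelianization.commutator_subset_ker _ hn
  simpa [MonoidHom.mem_ker] using this

def psi : ↥NN →* Multiplicative Qr where
  toFun n := (phi (n : BraidFour)).left
  map_one' := by simp
  map_mul' a b := by
    have := mul_left (phi (a : BraidFour)) (phi (b : BraidFour))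
    rw [← _root_.map_mul] at this
    have hr : (phi (a : BraidFour)).right = 1 := phi_right_one a.2
    rw [hr, _root_.map_one] at this
    simpa using this

lemma psi_conj (k : ℤ) (n : ↥NN) :
    psi (MulAut.conjNormal (sg 0 ^ k) n) = rho (Multiplicative.ofAdd k) (psi n) := by
  have hphi : phi (sg 0 ^ k) = inr (Multiplicative.ofAdd k) := by
    rw [map_zpow, phi_sg, fgen0, x₁, ← _root_.map_zpow]
    congr 1
    rw [← ofAdd_zsmul]
    norm_num
  have hn : phi (n : BraidFour) = inl (psi n) := by
    rw [← inl_left_mul_inr_right (phi (n : BraidFour)), phi_right_one n.2]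
    simp [psi]
  show (phi ((MulAut.conjNormal (sg 0 ^ k) n : ↥NN) : BraidFour)).left = _
  have hcoe : ((MulAut.conjNormal (sg 0 ^ k) n : ↥NN) : BraidFour)
      = sg 0 ^ k * (n : BraidFour) * (sg 0 ^ k)⁻¹ := by
    simp only [MulAut.conjNormal_apply]
  rw [hcoe, _root_.map_mul, _root_.map_mul, _root_.map_inv, hphi, hn,
    ← _root_.map_inv (inr (φ := rho)), ← inl_aut]
  simp

def theta : Abelianization ↥NN →* Multiplicative Qr := Abelianization.lift psi

def thetaA : Additive (Abelianization ↥NN) →+ Qr where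
  toFun m := (theta m.toMul).toAdd
  map_zero' := by
    show (theta 1).toAdd = 0
    rw [_root_.map_one]
    rfl
  map_add' a b := by
    show (theta (a.toMul * b.toMul)).toAdd = _
    rw [_root_.map_mul]
    rfl

def thetaL : Additive (Abelianization ↥NN) →ₗ[ℤ] Qr := thetaA.toIntLinearMap

lemma thetaL_cls (n : ↥NN) : thetaL (cls n) = (psi n).toAdd := rfl

def F : AlexQ →ₗ[ℚ] Qr := LinearMap.liftBaseChange ℚ thetaL

lemma F_tm (r : ℚ) (m : Additive (Abelianization ↥NN)) : F (tm r m) = r • thetaL m :=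
  LinearMap.liftBaseChange_tmul _ _ _ _

lemma psi_u : psi uN = Multiplicative.ofAdd (1 : Qr) := by
  show (phi u).left = _
  rw [u, _root_.map_mul, _root_.map_inv, phi_sg, phi_sg, fgen0, fgen1, x₂, x₁,
    mul_inv_cancel_right]
  simp

lemma F_al : F al = 1 := by
  rw [al, F_tm, thetaL_cls, psi_u]
  simp

lemma thetaL_conj (k : ℤ) (m : Additive (Abelianization ↥NN)) :
    thetaL (conjAct NN (sg 0 ^ k) m) = tq k * thetaL m := by
  obtain ⟨n, hn⟩ : ∃ n : ↥NN, Abelianization.of n = Additive.toMul m :=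
    QuotientGroup.mk_surjective (Additive.toMul m)
  have hm : m = cls n := by rw [cls, hn]; rfl
  subst hm
  rw [conjAct_cls, thetaL_cls, thetaL_cls, psi_conj]
  have : rho (Multiplicative.ofAdd k) (psi n)
      = Multiplicative.ofAdd (tq k * (psi n).toAdd) := by
    rw [← rho_apply]
    congr 1
  rw [this]
  rfl

set_option synthInstance.maxHeartbeats 1000000 in
lemma F_conj (k : ℤ) (x : AlexQ) : F (conjEnd (sg 0 ^ k) x) = tq k * F x := by
  have : ∀ y : ℚ ⊗[ℤ] Additive (Abelianization ↥NN),
      F (conjEnd (sg 0 ^ k) (y : AlexQ)) = tq k * F (y : AlexQ) := by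
    intro y
    induction y using TensorProduct.induction_on with
    | zero =>
        show F (conjEnd (sg 0 ^ k) 0) = tq k * F 0
        simp
    | tmul r m =>
        show F (conjEnd (sg 0 ^ k) (tm r m)) = tq k * F (tm r m)
        rw [conjEnd_tm, F_tm, F_tm, thetaL_conj, mul_smul_comm]
    | add a b iha ihb =>
        show F (conjEnd (sg 0 ^ k) (@HAdd.hAdd AlexQ AlexQ AlexQ _ a b)) = tq k * F (@HAdd.hAdd AlexQ AlexQ AlexQ _ a b)
        exact (congrArg F (map_add _ _ _)).trans ((map_add F _ _).trans
          ((congrArg₂ (· + ·) iha ihb).trans ((mul_add _ _ _).symm.trans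
            (congrArg (tq k * ·) (map_add F _ _).symm))))
  exact this x

end BraidAux
namespace BraidAux

open LaurentPolynomial

def tau (n : ℤ) : AlexQ := conjEnd (sg 0 ^ n) al

def L : LP →ₗ[ℚ] AlexQ :=
  (Finsupp.lsum ℚ fun n => LinearMap.toSpanSingleton ℚ AlexQ (tau n)) ∘ₗ
    (AddMonoidAlgebra.coeffLinearEquiv ℚ (S := ℚ) (M := ℤ)).toLinearMap

lemma L_T (n : ℤ) : L (LaurentPolynomial.T n) = tau n := by
  show (Finsupp.lsum ℚ fun n => LinearMap.toSpanSingleton ℚ AlexQ (tau n))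
    (Finsupp.single n (1:ℚ)) = tau n
  rw [Finsupp.lsum_single, LinearMap.toSpanSingleton_apply, one_smul]

lemma C_mul_T_eq (a : ℚ) (n : ℤ) :
    (LaurentPolynomial.C a * LaurentPolynomial.T n : LP) = a • LaurentPolynomial.T n := by
  rw [← LaurentPolynomial.single_eq_C_mul_T]
  show AddMonoidAlgebra.single n a = a • AddMonoidAlgebra.single n (1:ℚ)
  rw [AddMonoidAlgebra.smul_single', mul_one]

lemma L_gen (a : ℚ) (n : ℤ) :
    L (LaurentPolynomial.C a * LaurentPolynomial.T n) = a • tau n := by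
  rw [C_mul_T_eq, map_smul, L_T]

lemma tau_zero : tau 0 = al := by
  have h1 : conjEnd (1 : BraidFour) = 1 := by
    unfold conjEnd
    rw [_root_.map_one, _root_.map_one]
    rfl
  rw [tau, zpow_zero, h1]
  rfl

lemma conjEnd_tau (k n : ℤ) : conjEnd (sg 0 ^ k) (tau n) = tau (k + n) := by
  rw [tau, tau, ← conjEnd_mul, ← zpow_add]

lemma L_T_mul (k : ℤ) (f : LP) :
    L (LaurentPolynomial.T k * f) = conjEnd (sg 0 ^ k) (L f) := by
  induction f using LaurentPolynomial.induction_on' with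
  | add p q ihp ihq =>
      rw [mul_add, map_add, ihp, ihq, ← map_add]
      exact congrArg _ (map_add L p q).symm
  | C_mul_T n a =>
      rw [show LaurentPolynomial.T k * (LaurentPolynomial.C a * LaurentPolynomial.T n)
          = LaurentPolynomial.C a * LaurentPolynomial.T (k + n) from by
            rw [mul_left_comm, ← LaurentPolynomial.T_add],
        L_gen, L_gen, map_smul, conjEnd_tau]

lemma L_pol : L pol = 0 := by
  have hp : (pol : LP) = LaurentPolynomial.T 2 - LaurentPolynomial.T 1
      + LaurentPolynomial.T 0 := by
    rw [pol, LaurentPolynomial.T_zero]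
  rw [hp, map_add, map_sub, L_T, L_T, L_T, tau_zero]
  have h1 : tau 1 = al + tau 2 := rel_al
  rw [h1]
  abel

set_option synthInstance.maxHeartbeats 1000000 in
lemma L_Iq {f : LP} (hf : f ∈ Iq) : L f = 0 := by
  rw [Iq, Ideal.mem_span_singleton] at hf
  obtain ⟨c, rfl⟩ := hf
  induction c using LaurentPolynomial.induction_on' with
  | add p q ihp ihq => rw [mul_add, map_add, ihp, ihq, add_zero]
  | C_mul_T n a =>
      rw [show pol * (LaurentPolynomial.C a * LaurentPolynomial.T n)
          = a • (LaurentPolynomial.T n * pol) from by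
            rw [C_mul_T_eq, mul_smul_comm, mul_comm pol],
        map_smul, L_T_mul, L_pol, map_zero, smul_zero]

lemma F_L (f : LP) : F (L f) = mkQ f := by
  induction f using LaurentPolynomial.induction_on' with
  | add p q ihp ihq => rw [map_add, map_add, ihp, ihq, map_add]
  | C_mul_T n a =>
      rw [L_gen, map_smul, tau, F_conj, F_al, mul_one, C_mul_T_eq, map_smul, tq]

lemma F_surj : Function.Surjective F := by
  intro q
  obtain ⟨f, rfl⟩ := Ideal.Quotient.mk_surjective q
  exact ⟨L f, F_L f⟩

lemma gens_sub_range : gens ⊆ LinearMap.range L := by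
  rintro x ⟨k, rfl⟩
  exact ⟨LaurentPolynomial.T k, L_T k⟩

lemma F_inj : Function.Injective F := by
  rw [injective_iff_map_eq_zero]
  intro x hx
  have hxr : x ∈ LinearMap.range L := by
    have hsp : x ∈ Submodule.span ℚ gens := by rw [span_gens]; trivial
    exact (Submodule.span_le.mpr gens_sub_range) hsp
  obtain ⟨f, rfl⟩ := hxr
  have h0 : mkQ f = 0 := by rw [← F_L f]; exact hx
  exact L_Iq ((Ideal.Quotient.eq_zero_iff_mem).mp h0)

noncomputable def eqv : AlexQ ≃ₗ[ℚ] Qr := LinearEquiv.ofBijective F ⟨F_inj, F_surj⟩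

lemma eqv_t (a : AlexQ) : eqv (tAction a) = tq 1 * eqv a := by
  show F (tAction a) = tq 1 * F a
  rw [tAction_eq, show conjEnd (sg 0) = conjEnd (sg 0 ^ (1:ℤ)) from by rw [zpow_one]]
  exact F_conj 1 a

end BraidAux
namespace BraidAux

open Polynomial

noncomputable def polX : ℚ[X] := X ^ 2 - X + 1

abbrev Adj := AdjoinRoot polX

noncomputable def rt : Adj := AdjoinRoot.root polX

lemma rt_rel : rt ^ 2 - rt + 1 = 0 := by
  have h := AdjoinRoot.aeval_eq (f := polX) polX
  rw [AdjoinRoot.mk_self] at h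
  calc rt ^ 2 - rt + 1 = (aeval (AdjoinRoot.root polX)) polX := by
        show rt ^ 2 - rt + 1 = (aeval rt) (X ^ 2 - X + 1 : ℚ[X])
        simp only [map_add, map_sub, map_pow, aeval_X, _root_.map_one]
  _ = 0 := h

noncomputable def runit : Adjˣ where
  val := rt
  inv := 1 - rt
  val_inv := by linear_combination -rt_rel
  inv_val := by linear_combination -rt_rel

lemma runit_zpow_two : ((runit ^ (2:ℤ) : Adjˣ) : Adj) = rt ^ 2 := by
  rw [show (2:ℤ) = ((2:ℕ):ℤ) from rfl, zpow_natCast, Units.val_pow_eq_pow_val]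
  rfl

noncomputable def Emap : LP →ₐ[ℚ] Adj :=
  AddMonoidAlgebra.lift ℚ Adj ℤ ((Units.coeHom Adj).comp (zpowersHom Adjˣ runit))

lemma Emap_T (n : ℤ) : Emap (LaurentPolynomial.T n) = ((runit ^ n : Adjˣ) : Adj) := by
  calc Emap (LaurentPolynomial.T n)
      = (AddMonoidAlgebra.lift ℚ Adj ℤ ((Units.coeHom Adj).comp (zpowersHom Adjˣ runit)))
        (AddMonoidAlgebra.single n (1:ℚ)) := rfl
  _ = (1:ℚ) • ((Units.coeHom Adj).comp (zpowersHom Adjˣ runit)) (Multiplicative.ofAdd n) := by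
        exact AddMonoidAlgebra.lift_single _ _ _
  _ = ((runit ^ n : Adjˣ) : Adj) := by rw [one_smul]; rfl

lemma Emap_pol : Emap pol = 0 := by
  have hp : (pol : LP) = LaurentPolynomial.T 2 - LaurentPolynomial.T 1
      + LaurentPolynomial.T 0 := by rw [pol, LaurentPolynomial.T_zero]
  rw [hp, map_add, map_sub, Emap_T, Emap_T, Emap_T, runit_zpow_two, zpow_one, zpow_zero]
  show rt ^ 2 - rt + 1 = 0
  exact rt_rel

noncomputable def Ebar : Qr →ₐ[ℚ] Adj :=
  Ideal.Quotient.liftₐ Iq Emap (by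
    intro a ha
    rw [Iq, Ideal.mem_span_singleton] at ha
    obtain ⟨c, rfl⟩ := ha
    rw [_root_.map_mul, Emap_pol, zero_mul])

lemma haeval : (aeval (tq 1)) polX = 0 := by
  rw [polX]
  simp only [map_add, map_sub, map_pow, aeval_X, _root_.map_one]
  rw [show tq 1 ^ 2 = tq 1 * tq 1 from sq (tq 1), tq_mul,
    show (1:ℤ) + 1 = 2 from by norm_num]
  exact pol_rel

noncomputable def iota : Adj →ₐ[ℚ] Qr := AdjoinRoot.liftAlgHom polX (Algebra.ofId ℚ Qr) (tq 1) haeval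

lemma iota_rt : iota rt = tq 1 := AdjoinRoot.liftAlgHom_root polX _ _ haeval

lemma Ebar_tq (n : ℤ) : Ebar (tq n) = ((runit ^ n : Adjˣ) : Adj) := by
  rw [tq, mkQ_eq]
  rw [show Ebar (Ideal.Quotient.mk Iq (LaurentPolynomial.T n))
      = Emap (LaurentPolynomial.T n) from by
        rw [Ebar, Ideal.Quotient.liftₐ_apply]
        rfl]
  exact Emap_T n

lemma Ebar_iota : ∀ a : Adj, Ebar (iota a) = a := by
  have h : Ebar.comp iota = AlgHom.id ℚ Adj := by
    apply AdjoinRoot.algHom_ext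
    show Ebar (iota rt) = rt
    rw [iota_rt, Ebar_tq, zpow_one]
    rfl
  intro a
  calc Ebar (iota a) = (Ebar.comp iota) a := rfl
  _ = a := by rw [h]; rfl

lemma iota_inj : Function.Injective iota :=
  fun a b hab => by
    have := congrArg Ebar hab
    rwa [Ebar_iota, Ebar_iota] at this

lemma tq_neg_one : tq (-1) = 1 - tq 1 := by
  have h := congrArg (fun x => tq (-1) * x) pol_rel
  simp only [mul_sub, mul_add, mul_one, mul_zero, tq_mul] at h
  norm_num at h
  rw [tq_zero] at h
  linear_combination h

lemma tq_mem_range (n : ℤ) : tq n ∈ iota.range := by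
  induction n using Int.induction_on with
  | zero => rw [tq_zero]; exact one_mem _
  | succ k ih =>
      have : tq (k + 1) = tq k * tq 1 := (tq_mul _ _).symm
      rw [this]
      exact mul_mem ih ⟨rt, iota_rt⟩
  | pred k ih =>
      have : tq (-k - 1) = tq (-k) * tq (-1) := by
        rw [tq_mul, show -(k:ℤ) + -1 = -(k:ℤ) - 1 from by ring]
      rw [this, tq_neg_one]
      refine mul_mem ih ⟨1 - rt, ?_⟩
      rw [map_sub, _root_.map_one]
      congr 1
      exact iota_rt

lemma iota_surj : Function.Surjective iota := by
  intro q
  obtain ⟨f, rfl⟩ := Ideal.Quotient.mk_surjective q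
  suffices h : Ideal.Quotient.mk Iq f ∈ iota.range by exact h
  induction f using LaurentPolynomial.induction_on' with
  | add p q ihp ihq => rw [map_add]; exact add_mem ihp ihq
  | C_mul_T n a =>
      rw [show (LaurentPolynomial.C a * LaurentPolynomial.T n : LP)
          = a • LaurentPolynomial.T n from C_mul_T_eq a n]
      rw [show Ideal.Quotient.mk Iq (a • LaurentPolynomial.T n) = a • tq n from
        map_smul mkQ a (LaurentPolynomial.T n)]
      exact Subalgebra.smul_mem _ (tq_mem_range n) a

lemma polX_natDegree : polX.natDegree = 2 := by
  rw [polX]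
  compute_degree!

lemma polX_ne_zero : polX ≠ 0 := by
  intro h
  have := polX_natDegree
  rw [h] at this
  simp at this

lemma finrank_Adj : Module.finrank ℚ Adj = 2 := by
  rw [show Module.finrank ℚ Adj = Module.finrank ℚ (AdjoinRoot polX) from rfl]
  rw [(AdjoinRoot.powerBasis polX_ne_zero).finrank]
  exact polX_natDegree

noncomputable def eqv2 : Adj ≃ₗ[ℚ] Qr :=
  LinearEquiv.ofBijective iota.toLinearMap ⟨iota_inj, iota_surj⟩

lemma finrank_Qr : Module.finrank ℚ Qr = 2 := by
  rw [← eqv2.finrank_eq]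
  exact finrank_Adj

lemma finrank_AlexQ : Module.finrank ℚ AlexQ = 2 := by
  rw [eqv.finrank_eq]
  exact finrank_Qr

end BraidAux
/-- `𝔅₄` has infinite cyclic abelianization (each `σᵢ` mapping to the same generator), and
its rationalized Alexander module, with `t` acting by conjugation by `σ₁`, is isomorphic to
`ℚ[t,t⁻¹]/(t² - t + 1)` as a `ℚ[t,t⁻¹]`-module (a `ℚ`-linear isomorphism intertwining the
`t`-actions); in particular `δ₀(𝔅₄) = dim_ℚ(G'/G'' ⊗ ℚ) = 2`. -/
theorem braid_four_alexander_module :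
    (∃ e : Abelianization BraidFour ≃* Multiplicative ℤ,
      ∀ i : Fin 3, e (Abelianization.of (PresentedGroup.of (rels := braidRels) i)) =
        Multiplicative.ofAdd 1) ∧
    (∃ e : AlexQ ≃ₗ[ℚ]
        (LaurentPolynomial ℚ ⧸
          Ideal.span {(LaurentPolynomial.T 2 - LaurentPolynomial.T 1 + 1 : LaurentPolynomial ℚ)}),
      ∀ a : AlexQ, e (tAction a) =
        Ideal.Quotient.mk (Ideal.span {(LaurentPolynomial.T 2 - LaurentPolynomial.T 1 + 1 : LaurentPolynomial ℚ)})
          (LaurentPolynomial.T 1) * e a) ∧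
    Module.finrank ℚ AlexQ = 2 := by
  refine ⟨⟨BraidAux.abIso, fun i => BraidAux.abIso_of i⟩,
    ⟨BraidAux.eqv, fun a => BraidAux.eqv_t a⟩, BraidAux.finrank_AlexQ⟩
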